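/- Let β ≥ 0 and ε ∈ (0,1). Let (y_m) and (z_m) be sequences of positive integers with y_m/m → 1, z_m/m → 1, and q_m := y_m − z_m ≥ 9 for all m. Then for all sufficiently large m: P[ S(z_m, y_m) < (1−ε)·q_m·m^{−β} ] ≤ e^{−(1/2)ε√(q_m) + 1}, and P[ S(z_m, y_m) > (1+ε)·q_m·m^{−β} ] ≤ e^{−(1/2)ε√(q_m) + 9/2}. -/

import Mathlib

open MeasureTheory Filter

section Aux1
open ProbabilityTheory Real Set

lemma expMap_eq {Ω : Type*} [MeasurableSpace Ω] (P : Measure Ω) [IsProbabilityMeasure P]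
    {X : Ω → ℝ} (hX : Measurable X) {r : ℝ} (hr : 0 < r)
    (h : ∀ u : ℝ, 0 ≤ u → P {ω | u < X ω} = ENNReal.ofReal (Real.exp (-r * u))) :
    P.map X = volume.withDensity (exponentialPDF r) := by
  have hmap : IsProbabilityMeasure (P.map X) := Measure.isProbabilityMeasure_map hX.aemeasurable
  refine Measure.ext_of_Iic _ _ (fun a => ?_)
  have hXm : ∀ u : ℝ, MeasurableSet {ω | u < X ω} := fun u =>
    measurableSet_lt measurable_const hX
  have hle : ∀ u : ℝ, P {ω | X ω ≤ u} = 1 - P {ω | u < X ω} := by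
    intro u
    have : {ω | X ω ≤ u} = {ω | u < X ω}ᶜ := by ext ω; simp
    rw [this, measure_compl (hXm u) (measure_ne_top _ _), measure_univ]
  have hmapa : P.map X (Iic a) = P {ω | X ω ≤ a} := by
    rw [Measure.map_apply hX measurableSet_Iic]; rfl
  have hν : volume.withDensity (exponentialPDF r) (Iic a)
      = ENNReal.ofReal (if 0 ≤ a then 1 - Real.exp (-(r * a)) else 0) := by
    rw [withDensity_apply _ measurableSet_Iic, lintegral_exponentialPDF_eq_antiDeriv hr]
  rw [hmapa, hle, hν]
  by_cases ha : 0 ≤ a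
  · rw [if_pos ha, h a ha, ENNReal.ofReal_sub _ (exp_nonneg _), ENNReal.ofReal_one,
      neg_mul]
  · rw [if_neg ha, ENNReal.ofReal_zero]
    have h0 : P {ω | (0:ℝ) < X ω} = 1 := by
      rw [h 0 le_rfl]; simp
    have : P {ω | a < X ω} = 1 := by
      refine le_antisymm (prob_le_one) ?_
      rw [← h0]
      exact measure_mono (fun ω hω => lt_trans (not_le.mp ha) hω)
    rw [this, tsub_self]

lemma mgf_exp_aux {Ω : Type*} [MeasurableSpace Ω] (P : Measure Ω) [IsProbabilityMeasure P]
    {X : Ω → ℝ} (hX : Measurable X) {r : ℝ} (hr : 0 < r)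
    (h : ∀ u : ℝ, 0 ≤ u → P {ω | u < X ω} = ENNReal.ofReal (Real.exp (-r * u)))
    {t : ℝ} (ht : t < r) :
    Integrable (fun ω => Real.exp (t * X ω)) P ∧ mgf X P t = r / (r - t) := by
  have hmap := expMap_eq P hX hr h
  have hrt : 0 < r - t := by linarith
  have hgm : Measurable fun x : ℝ => ENNReal.ofReal (Real.exp (t * x)) :=
    (Real.measurable_exp.comp (measurable_id.const_mul t)).ennreal_ofReal
  have hpdfm : Measurable (exponentialPDF r) := (measurable_exponentialPDFReal r).ennreal_ofReal
  have hind : (fun x => (exponentialPDF r * fun x => ENNReal.ofReal (Real.exp (t * x))) x)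
      = fun x => (Ici (0:ℝ)).indicator (fun x => ENNReal.ofReal (r * Real.exp (-((r - t) * x)))) x := by
    funext x
    simp only [Pi.mul_apply]
    by_cases hx : 0 ≤ x
    · rw [indicator_of_mem (mem_Ici.mpr hx), exponentialPDF_of_nonneg hx,
        ← ENNReal.ofReal_mul (by positivity)]
      congr 1
      rw [mul_assoc, ← Real.exp_add]
      ring_nf
    · rw [indicator_of_notMem (fun hc => hx (mem_Ici.mp hc)), exponentialPDF_of_neg (not_le.mp hx), zero_mul]
  have hintg : IntegrableOn (fun x => r * Real.exp (-((r - t) * x))) (Ioi (0:ℝ)) := by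
    have h1 := (exp_neg_integrableOn_Ioi 0 hrt).const_mul r
    have h2 : (fun x => r * Real.exp (-((r - t) * x))) = fun x => r * Real.exp (-(r - t) * x) := by
      funext x; rw [neg_mul]
    rw [h2]; exact h1
  have hval : ∫ x in Ioi (0:ℝ), r * Real.exp (-((r - t) * x)) = r / (r - t) := by
    rw [MeasureTheory.integral_const_mul]
    have h3 := MeasureTheory.integral_comp_mul_left_Ioi (fun x => Real.exp (-x)) 0 hrt
    simp only [mul_zero, smul_eq_mul] at h3
    rw [h3, integral_exp_neg_Ioi, neg_zero, Real.exp_zero, mul_one, div_eq_mul_inv]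
  have hL : ∫⁻ x, ENNReal.ofReal (Real.exp (t * x)) ∂(volume.withDensity (exponentialPDF r))
      = ENNReal.ofReal (r / (r - t)) := by
    rw [lintegral_withDensity_eq_lintegral_mul _ hpdfm hgm, hind,
      lintegral_indicator measurableSet_Ici _,
      Measure.restrict_congr_set Ioi_ae_eq_Ici.symm,
      ← ofReal_integral_eq_lintegral_ofReal hintg
        (ae_of_all _ (fun x => by positivity)), hval]
  have hLP : ∫⁻ ω, ENNReal.ofReal (Real.exp (t * X ω)) ∂P = ENNReal.ofReal (r / (r - t)) := by
    rw [← hL, ← hmap, lintegral_map hgm hX]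
  have hint : Integrable (fun ω => Real.exp (t * X ω)) P := by
    refine ⟨(Real.measurable_exp.comp ((hX.const_mul t))).aestronglyMeasurable, ?_⟩
    rw [hasFiniteIntegral_iff_ofReal (ae_of_all _ (fun ω => Real.exp_nonneg _)), hLP]
    exact ENNReal.ofReal_lt_top
  refine ⟨hint, ?_⟩
  rw [mgf, integral_eq_lintegral_of_nonneg_ae (ae_of_all _ (fun ω => Real.exp_nonneg _))
    hint.aestronglyMeasurable, hLP, ENNReal.toReal_ofReal (by positivity)]

lemma factor_lower {r l : ℝ} (hr : 0 < r) (hl : 0 < l) :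
    r / (r + l) ≤ Real.exp (-(l / (r + l))) := by
  have h := Real.add_one_le_exp (-(l / (r + l)))
  have : r / (r + l) = -(l / (r + l)) + 1 := by field_simp; ring
  linarith

lemma factor_upper {r l : ℝ} (hl : 0 < l) (hlr : l < r) :
    r / (r - l) ≤ Real.exp (l / (r - l)) := by
  have h := Real.add_one_le_exp (l / (r - l))
  have hrl : r - l ≠ 0 := ne_of_gt (by linarith)
  have : r / (r - l) = l / (r - l) + 1 := by field_simp; ring
  linarith

lemma num_lower {w ε s Q : ℝ} (hw : 3 ≤ w) (hε0 : 0 < ε) (hε1 : ε < 1)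
    (hs : s = 1 / w) (hQ : Q = w * w) :
    (1 - ε) * s * Q - Q * (s / ((1 + ε / 8) + s)) ≤ -(1 / 2) * ε * w + 1 := by
  have hw0 : 0 < w := by linarith
  subst hs hQ
  obtain ⟨d, hd_def⟩ : ∃ d : ℝ, d = (1 + ε / 8) + 1 / w := ⟨_, rfl⟩
  have hd : 0 < d := by rw [hd_def]; positivity
  have hsQ : (1 - ε) * (1 / w) * (w * w) = (1 - ε) * w := by field_simp
  have hQs : (w * w) * ((1 / w) / ((1 + ε / 8) + 1 / w)) = w / d := by rw [hd_def]; field_simp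
  rw [hsQ, hQs]
  have key : w * (2 - d) ≤ w / d := by
    rw [le_div_iff₀ hd]
    nlinarith [sq_nonneg (d - 1)]
  have : (1 - ε) * w - w * (2 - d) = -(7 / 8) * ε * w + 1 := by
    rw [hd_def]; field_simp; ring
  nlinarith [mul_pos hε0 hw0]

lemma num_upper {w ε s Q : ℝ} (hw : 3 ≤ w) (hε0 : 0 < ε) (hε1 : ε < 1)
    (hs : s = 1 / w) (hQ : Q = w * w) :
    -((1 + ε) * s * Q) + Q * (s / ((1 - ε / 8) - s)) ≤ -(1 / 2) * ε * w + 9 / 2 := by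
  have hw0 : 0 < w := by linarith
  subst hs hQ
  have hsle : 1 / w ≤ 1 / 3 := by
    rw [div_le_div_iff₀ hw0 (by norm_num)]; linarith
  obtain ⟨d, hd_def⟩ : ∃ d : ℝ, d = (1 - ε / 8) - 1 / w := ⟨_, rfl⟩
  have hd2 : (1:ℝ) / 2 ≤ d := by
    rw [hd_def]; linarith
  have hd : 0 < d := lt_of_lt_of_le (by norm_num) hd2
  have hd1 : d ≤ 1 := by
    rw [hd_def]
    have : 0 < 1 / w := by positivity
    linarith
  have hsQ : (1 + ε) * (1 / w) * (w * w) = (1 + ε) * w := by field_simp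
  have hQs : (w * w) * ((1 / w) / ((1 - ε / 8) - 1 / w)) = w / d := by rw [hd_def]; field_simp
  rw [hsQ, hQs]
  have key : w / d ≤ w * (1 + 2 * (1 - d)) := by
    rw [div_le_iff₀ hd]
    nlinarith [mul_nonneg (by linarith : (0:ℝ) ≤ 2 * d - 1) (by linarith : (0:ℝ) ≤ 1 - d), hw0.le, mul_nonneg hw0.le (mul_nonneg (by linarith : (0:ℝ) ≤ 2 * d - 1) (by linarith : (0:ℝ) ≤ 1 - d))]
  have : -((1 + ε) * w) + w * (1 + 2 * (1 - d)) = -(3 / 4) * ε * w + 2 := by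
    rw [hd_def]; field_simp; ring
  nlinarith [mul_pos hε0 hw0]

end Aux1

noncomputable section

/-- Partial sums `S(x,y) = Σ_{j=x}^{y-1} ξ_j`. -/
def expSum {Ω : Type*} (ξ : ℕ → Ω → ℝ) (x y : ℕ) (ω : Ω) : ℝ :=
  ∑ j ∈ Finset.Ico x y, ξ j ω

section Aux2
open ProbabilityTheory Real Set

lemma tail_bounds {Ω : Type*} [MeasurableSpace Ω] (P : Measure Ω) [IsProbabilityMeasure P]
    (β ε : ℝ) (hβ : 0 ≤ β) (hε0 : 0 < ε) (hε1 : ε < 1)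
    (ξ : ℕ → Ω → ℝ) (hmeas : ∀ j, Measurable (ξ j))
    (hindep : ProbabilityTheory.iIndepFun ξ P)
    (hexp : ∀ j : ℕ, 1 ≤ j → ∀ u : ℝ, 0 ≤ u →
      P {ω | u < ξ j ω} = ENNReal.ofReal (Real.exp (-(j : ℝ) ^ β * u)))
    (m zz yy : ℕ) (hm : 1 ≤ m) (hz1 : 1 ≤ zz) (hq : 9 ≤ yy - zz)
    (hup : ∀ j ∈ Finset.Ico zz yy, ((j:ℝ)) ^ β ≤ (1 + ε / 8) * (m:ℝ) ^ β)
    (hlo : ∀ j ∈ Finset.Ico zz yy, (1 - ε / 8) * (m:ℝ) ^ β ≤ ((j:ℝ)) ^ β) :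
    (P {ω | expSum ξ zz yy ω
          < (1 - ε) * ((yy - zz : ℕ) : ℝ) * (m : ℝ) ^ (-β)}).toReal
        ≤ Real.exp (-(1 / 2) * ε * Real.sqrt ((yy - zz : ℕ) : ℝ) + 1) ∧
    (P {ω | (1 + ε) * ((yy - zz : ℕ) : ℝ) * (m : ℝ) ^ (-β)
          < expSum ξ zz yy ω}).toReal
        ≤ Real.exp (-(1 / 2) * ε * Real.sqrt ((yy - zz : ℕ) : ℝ) + 9 / 2) := by
  have hm0 : (0:ℝ) < (m:ℝ) := by exact_mod_cast hm
  obtain ⟨B, hB_def⟩ : ∃ B : ℝ, B = (m:ℝ) ^ β := ⟨_, rfl⟩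
  have hB : (0:ℝ) < B := hB_def ▸ Real.rpow_pos_of_pos hm0 β
  have hBinv : (m:ℝ) ^ (-β) = B⁻¹ := by
    rw [hB_def, Real.rpow_neg hm0.le]
  obtain ⟨Q, hQ_def⟩ : ∃ Q : ℝ, Q = ((yy - zz : ℕ) : ℝ) := ⟨_, rfl⟩
  have hQ9 : (9:ℝ) ≤ Q := by rw [hQ_def]; exact_mod_cast hq
  have hQ0 : 0 ≤ Q := by linarith
  obtain ⟨w, hw_def⟩ : ∃ w : ℝ, w = Real.sqrt Q := ⟨_, rfl⟩
  have hw2 : w * w = Q := by rw [hw_def]; exact Real.mul_self_sqrt hQ0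
  have hw3 : 3 ≤ w := by
    have := hw_def ▸ Real.sqrt_nonneg Q
    nlinarith
  have hw0 : 0 < w := by linarith
  obtain ⟨s, hs_def⟩ : ∃ s : ℝ, s = 1 / w := ⟨_, rfl⟩
  have hs0 : 0 < s := by rw [hs_def]; positivity
  have hsle : s ≤ 1 / 3 := by
    rw [hs_def, div_le_div_iff₀ hw0 (by norm_num)]; linarith
  obtain ⟨l, hl_def⟩ : ∃ l : ℝ, l = s * B := ⟨_, rfl⟩
  have hl0 : 0 < l := hl_def ▸ mul_pos hs0 hB
  rw [hBinv, ← hQ_def, ← hw_def]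
  -- facts about each j in the range
  have hj1 : ∀ j ∈ Finset.Ico zz yy, 1 ≤ j := fun j hj =>
    le_trans hz1 (Finset.mem_Ico.mp hj).1
  have hrj : ∀ j ∈ Finset.Ico zz yy, (0:ℝ) < (j:ℝ) ^ β := fun j hj =>
    Real.rpow_pos_of_pos (by exact_mod_cast hj1 j hj) β
  have hcard : (Finset.Ico zz yy).card = yy - zz := Nat.card_Ico zz yy
  have hup' : ∀ j ∈ Finset.Ico zz yy, ((j:ℝ)) ^ β ≤ (1 + ε / 8) * B := by
    intro j hj; rw [hB_def]; exact hup j hj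
  have hlo' : ∀ j ∈ Finset.Ico zz yy, (1 - ε / 8) * B ≤ ((j:ℝ)) ^ β := by
    intro j hj; rw [hB_def]; exact hlo j hj
  have hSapp : ∀ ω, expSum ξ zz yy ω = (∑ j ∈ Finset.Ico zz yy, ξ j) ω := by
    intro ω; rw [Finset.sum_apply]; rfl
  have hBne : B ≠ 0 := ne_of_gt hB
  constructor
  · -- lower tail
    obtain ⟨a, ha_def⟩ : ∃ a : ℝ, a = (1 - ε) * Q * B⁻¹ := ⟨_, rfl⟩
    rw [← ha_def]
    have hintj : ∀ j ∈ Finset.Ico zz yy,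
        Integrable (fun ω => Real.exp (-l * ξ j ω)) P := by
      intro j hj
      exact (mgf_exp_aux P (hmeas j) (hrj j hj) (hexp j (hj1 j hj))
        (lt_of_lt_of_le (by linarith) (hrj j hj).le)).1
    have hint : Integrable (fun ω => Real.exp (-l * (∑ j ∈ Finset.Ico zz yy, ξ j) ω)) P :=
      hindep.integrable_exp_mul_sum hmeas hintj
    have chern := measure_le_le_exp_mul_mgf (μ := P)
      (X := ∑ j ∈ Finset.Ico zz yy, ξ j) (t := -l) a (by linarith) hint
    have hmgf : mgf (∑ j ∈ Finset.Ico zz yy, ξ j) P (-l)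
        = ∏ j ∈ Finset.Ico zz yy, ((j:ℝ) ^ β / ((j:ℝ) ^ β + l)) := by
      rw [hindep.mgf_sum hmeas]
      refine Finset.prod_congr rfl (fun j hj => ?_)
      rw [(mgf_exp_aux P (hmeas j) (hrj j hj) (hexp j (hj1 j hj))
        (lt_of_lt_of_le (by linarith) (hrj j hj).le)).2, sub_neg_eq_add]
    have hden0 : (0:ℝ) < (1 + ε / 8) + s := by linarith
    have hprod : ∏ j ∈ Finset.Ico zz yy, ((j:ℝ) ^ β / ((j:ℝ) ^ β + l))
        ≤ Real.exp (Q * -(s / ((1 + ε / 8) + s))) := by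
      have hfac : ∀ j ∈ Finset.Ico zz yy,
          (j:ℝ) ^ β / ((j:ℝ) ^ β + l) ≤ Real.exp (-(s / ((1 + ε / 8) + s))) := by
        intro j hj
        refine le_trans (factor_lower (hrj j hj) hl0) (Real.exp_le_exp.mpr ?_)
        rw [neg_le_neg_iff]
        have h1 : (j:ℝ) ^ β + l ≤ ((1 + ε / 8) + s) * B := by
          rw [hl_def]; have := hup' j hj; nlinarith
        have h2 : 0 < (j:ℝ) ^ β + l := by positivity
        calc s / ((1 + ε / 8) + s) = l / (((1 + ε / 8) + s) * B) := by
              rw [hl_def]; field_simp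
          _ ≤ l / ((j:ℝ) ^ β + l) := div_le_div_of_nonneg_left hl0.le h2 h1
      calc ∏ j ∈ Finset.Ico zz yy, ((j:ℝ) ^ β / ((j:ℝ) ^ β + l))
          ≤ ∏ j ∈ Finset.Ico zz yy, Real.exp (-(s / ((1 + ε / 8) + s))) :=
            Finset.prod_le_prod (fun j hj => by positivity) hfac
        _ = Real.exp (Q * -(s / ((1 + ε / 8) + s))) := by
            rw [Finset.prod_const, hcard, ← Real.exp_nat_mul, hQ_def]
    have hla : -(-l) * a = (1 - ε) * s * Q := by
      rw [ha_def, hl_def, neg_neg]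
      field_simp
    have hfinal : Real.exp (-(-l) * a) * mgf (∑ j ∈ Finset.Ico zz yy, ξ j) P (-l)
        ≤ Real.exp (-(1 / 2) * ε * w + 1) := by
      rw [hmgf, hla]
      calc Real.exp ((1 - ε) * s * Q) * ∏ j ∈ Finset.Ico zz yy, ((j:ℝ) ^ β / ((j:ℝ) ^ β + l))
          ≤ Real.exp ((1 - ε) * s * Q) * Real.exp (Q * -(s / ((1 + ε / 8) + s))) :=
            mul_le_mul_of_nonneg_left hprod (Real.exp_nonneg _)
        _ = Real.exp ((1 - ε) * s * Q - Q * (s / ((1 + ε / 8) + s))) := by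
            rw [← Real.exp_add]; ring_nf
        _ ≤ Real.exp (-(1 / 2) * ε * w + 1) :=
            Real.exp_le_exp.mpr (num_lower hw3 hε0 hε1 hs_def (hw2.symm))
    refine le_trans (le_trans ?_ chern) hfinal
    refine ENNReal.toReal_mono (measure_ne_top _ _) (measure_mono ?_)
    intro ω hω
    simp only [Set.mem_setOf_eq] at *
    rw [← hSapp ω]
    exact le_of_lt hω
  · -- upper tail
    obtain ⟨a, ha_def⟩ : ∃ a : ℝ, a = (1 + ε) * Q * B⁻¹ := ⟨_, rfl⟩
    rw [← ha_def]
    have hlrj : ∀ j ∈ Finset.Ico zz yy, l < (j:ℝ) ^ β := by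
      intro j hj
      have := hlo' j hj
      rw [hl_def]
      nlinarith
    have hintj : ∀ j ∈ Finset.Ico zz yy,
        Integrable (fun ω => Real.exp (l * ξ j ω)) P := by
      intro j hj
      exact (mgf_exp_aux P (hmeas j) (hrj j hj) (hexp j (hj1 j hj)) (hlrj j hj)).1
    have hint : Integrable (fun ω => Real.exp (l * (∑ j ∈ Finset.Ico zz yy, ξ j) ω)) P :=
      hindep.integrable_exp_mul_sum hmeas hintj
    have chern := measure_ge_le_exp_mul_mgf (μ := P)
      (X := ∑ j ∈ Finset.Ico zz yy, ξ j) (t := l) a (by linarith) hint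
    have hmgf : mgf (∑ j ∈ Finset.Ico zz yy, ξ j) P l
        = ∏ j ∈ Finset.Ico zz yy, ((j:ℝ) ^ β / ((j:ℝ) ^ β - l)) := by
      rw [hindep.mgf_sum hmeas]
      exact Finset.prod_congr rfl (fun j hj =>
        (mgf_exp_aux P (hmeas j) (hrj j hj) (hexp j (hj1 j hj)) (hlrj j hj)).2)
    have hden : 0 < (1 - ε / 8) - s := by linarith
    have hprod : ∏ j ∈ Finset.Ico zz yy, ((j:ℝ) ^ β / ((j:ℝ) ^ β - l))
        ≤ Real.exp (Q * (s / ((1 - ε / 8) - s))) := by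
      have hfac : ∀ j ∈ Finset.Ico zz yy,
          (j:ℝ) ^ β / ((j:ℝ) ^ β - l) ≤ Real.exp (s / ((1 - ε / 8) - s)) := by
        intro j hj
        refine le_trans (factor_upper hl0 (hlrj j hj)) (Real.exp_le_exp.mpr ?_)
        have h1 : ((1 - ε / 8) - s) * B ≤ (j:ℝ) ^ β - l := by
          rw [hl_def]; have := hlo' j hj; nlinarith
        have h2 : 0 < (j:ℝ) ^ β - l := by
          have := hlrj j hj; linarith
        have h3 : 0 < ((1 - ε / 8) - s) * B := by positivity
        calc l / ((j:ℝ) ^ β - l) ≤ l / (((1 - ε / 8) - s) * B) :=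
              div_le_div_of_nonneg_left hl0.le h3 h1
          _ = s / ((1 - ε / 8) - s) := by rw [hl_def]; exact mul_div_mul_right _ _ hBne
      calc ∏ j ∈ Finset.Ico zz yy, ((j:ℝ) ^ β / ((j:ℝ) ^ β - l))
          ≤ ∏ j ∈ Finset.Ico zz yy, Real.exp (s / ((1 - ε / 8) - s)) :=
            Finset.prod_le_prod (fun j hj => div_nonneg (hrj j hj).le
              (by have := hlrj j hj; linarith)) hfac
        _ = Real.exp (Q * (s / ((1 - ε / 8) - s))) := by
            rw [Finset.prod_const, hcard, ← Real.exp_nat_mul, hQ_def]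
    have hla : -l * a = -((1 + ε) * s * Q) := by
      rw [ha_def, hl_def]
      field_simp
    have hfinal : Real.exp (-l * a) * mgf (∑ j ∈ Finset.Ico zz yy, ξ j) P l
        ≤ Real.exp (-(1 / 2) * ε * w + 9 / 2) := by
      rw [hmgf, hla]
      calc Real.exp (-((1 + ε) * s * Q)) * ∏ j ∈ Finset.Ico zz yy, ((j:ℝ) ^ β / ((j:ℝ) ^ β - l))
          ≤ Real.exp (-((1 + ε) * s * Q)) * Real.exp (Q * (s / ((1 - ε / 8) - s))) :=
            mul_le_mul_of_nonneg_left hprod (Real.exp_nonneg _)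
        _ = Real.exp (-((1 + ε) * s * Q) + Q * (s / ((1 - ε / 8) - s))) := by
            rw [← Real.exp_add]
        _ ≤ Real.exp (-(1 / 2) * ε * w + 9 / 2) :=
            Real.exp_le_exp.mpr (num_upper hw3 hε0 hε1 hs_def (hw2.symm))
    refine le_trans (le_trans ?_ chern) hfinal
    refine ENNReal.toReal_mono (measure_ne_top _ _) (measure_mono ?_)
    intro ω hω
    simp only [Set.mem_setOf_eq] at *
    rw [← hSapp ω]
    exact le_of_lt hω

end Aux2

/-- **Chernoff-type bounds.** Let `β ≥ 0`, `ε ∈ (0,1)`, and `ξ_j` independent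
exponentials with mean `j^{-β}` (survival function `P[ξ_j > u] = exp(-j^β u)`). For sequences
of positive integers `y_m ~ m`, `z_m ~ m` with `q_m = y_m - z_m ≥ 9`, for all large `m`:
`P[S(z_m,y_m) < (1-ε)q_m m^{-β}] ≤ e^{-εq_m^{1/2}/2 + 1}` and
`P[S(z_m,y_m) > (1+ε)q_m m^{-β}] ≤ e^{-εq_m^{1/2}/2 + 9/2}`. -/
theorem stmt_18 {Ω : Type*} [MeasurableSpace Ω] (ℙ : Measure Ω) [IsProbabilityMeasure ℙ]
    (β ε : ℝ) (hβ : 0 ≤ β) (hε0 : 0 < ε) (hε1 : ε < 1)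
    (ξ : ℕ → Ω → ℝ)
    (hmeas : ∀ j, Measurable (ξ j))
    (hindep : ProbabilityTheory.iIndepFun ξ ℙ)
    (hexp : ∀ j : ℕ, 1 ≤ j → ∀ u : ℝ, 0 ≤ u →
      ℙ {ω | u < ξ j ω} = ENNReal.ofReal (Real.exp (-(j : ℝ) ^ β * u)))
    (y z : ℕ → ℕ) (hzpos : ∀ m, 0 < z m)
    (hy : Tendsto (fun m : ℕ => (y m : ℝ) / (m : ℝ)) atTop (nhds 1))
    (hz : Tendsto (fun m : ℕ => (z m : ℝ) / (m : ℝ)) atTop (nhds 1))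
    (hq : ∀ m : ℕ, 9 ≤ y m - z m) :
    ∃ M : ℕ, ∀ m : ℕ, M ≤ m →
      (ℙ {ω | expSum ξ (z m) (y m) ω
            < (1 - ε) * ((y m - z m : ℕ) : ℝ) * (m : ℝ) ^ (-β)}).toReal
          ≤ Real.exp (-(1 / 2) * ε * Real.sqrt ((y m - z m : ℕ) : ℝ) + 1) ∧
      (ℙ {ω | (1 + ε) * ((y m - z m : ℕ) : ℝ) * (m : ℝ) ^ (-β)
            < expSum ξ (z m) (y m) ω}).toReal
          ≤ Real.exp (-(1 / 2) * ε * Real.sqrt ((y m - z m : ℕ) : ℝ) + 9 / 2) := by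
  have hyr : Tendsto (fun m : ℕ => ((y m : ℝ) / (m : ℝ)) ^ β) atTop (nhds 1) := by
    have := hy.rpow_const (p := β) (Or.inr hβ)
    rwa [Real.one_rpow] at this
  have hzr : Tendsto (fun m : ℕ => ((z m : ℝ) / (m : ℝ)) ^ β) atTop (nhds 1) := by
    have := hz.rpow_const (p := β) (Or.inr hβ)
    rwa [Real.one_rpow] at this
  have hEy : ∀ᶠ m : ℕ in atTop, ((y m : ℝ) / (m : ℝ)) ^ β ≤ 1 + ε / 8 :=
    hyr.eventually_le_const (by linarith)
  have hEz : ∀ᶠ m : ℕ in atTop, 1 - ε / 8 ≤ ((z m : ℝ) / (m : ℝ)) ^ β :=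
    hzr.eventually_const_le (by linarith)
  have hEm : ∀ᶠ m : ℕ in atTop, 1 ≤ m := eventually_ge_atTop 1
  obtain ⟨M, hM⟩ := eventually_atTop.mp ((hEy.and hEz).and hEm)
  refine ⟨M, fun m hm => ?_⟩
  obtain ⟨⟨h1, h2⟩, h3⟩ := hM m hm
  have hm0 : (0:ℝ) < (m:ℝ) := by exact_mod_cast h3
  have hmne : (m:ℝ) ≠ 0 := ne_of_gt hm0
  have hB : (0:ℝ) < (m:ℝ) ^ β := Real.rpow_pos_of_pos hm0 β
  refine tail_bounds ℙ β ε hβ hε0 hε1 ξ hmeas hindep hexp m (z m) (y m) h3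
    (hzpos m) (hq m) ?_ ?_
  · intro j hj
    obtain ⟨hj1, hj2⟩ := Finset.mem_Ico.mp hj
    have hjy : (j:ℝ) ≤ (y m : ℝ) := by exact_mod_cast hj2.le
    calc (j:ℝ) ^ β ≤ (y m : ℝ) ^ β :=
          Real.rpow_le_rpow (Nat.cast_nonneg j) hjy hβ
      _ = ((y m : ℝ) / (m:ℝ)) ^ β * (m:ℝ) ^ β := by
          rw [← Real.mul_rpow (by positivity) hm0.le, div_mul_cancel₀ _ hmne]
      _ ≤ (1 + ε / 8) * (m:ℝ) ^ β := by
          exact mul_le_mul_of_nonneg_right h1 hB.le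
  · intro j hj
    obtain ⟨hj1, hj2⟩ := Finset.mem_Ico.mp hj
    have hjz : (z m : ℝ) ≤ (j:ℝ) := by exact_mod_cast hj1
    calc (1 - ε / 8) * (m:ℝ) ^ β ≤ ((z m : ℝ) / (m:ℝ)) ^ β * (m:ℝ) ^ β :=
          mul_le_mul_of_nonneg_right h2 hB.le
      _ = (z m : ℝ) ^ β := by
          rw [← Real.mul_rpow (by positivity) hm0.le, div_mul_cancel₀ _ hmne]
      _ ≤ (j:ℝ) ^ β := Real.rpow_le_rpow (Nat.cast_nonneg _) hjz hβ
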